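/- The quantity λ₀(n) is strictly increasing in the dimension: for all integers 1 ≤ m < n, one has λ₀(m) < λ₀(n). -/

import Mathlib

open Real Filter

noncomputable def b (n : ℕ) (j : ℕ) : ℝ :=
  ∏ ℓ ∈ Finset.Icc 1 j, 1 / (2 * (ℓ : ℝ) * ((n : ℝ) + 2 * ((ℓ : ℝ) - 1)))

noncomputable def phi0 (n : ℕ) (ρ : ℝ) : ℝ := ∑' j : ℕ, b n j * ρ ^ (2 * j)

lemma b_zero (n : ℕ) : b n 0 = 1 := by simp [b]

lemma b_succ (n j : ℕ) :
    b n (j + 1) = b n j * (1 / (2 * ((j : ℝ) + 1) * ((n : ℝ) + 2 * (j : ℝ)))) := by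
  rw [b, b, Finset.prod_Icc_succ_top (Nat.le_add_left 1 j)]
  push_cast
  ring_nf
  norm_num
  refine (mul_comm _ _).trans ?_
  congr 1
  congr 1
  exact Finset.prod_congr rfl (fun _ _ => by ring)

lemma b_pos {n : ℕ} (hn : 1 ≤ n) (j : ℕ) : 0 < b n j := by
  induction j with
  | zero => simp [b_zero]
  | succ k ih =>
    rw [b_succ]
    have hn' : (1 : ℝ) ≤ (n : ℝ) := by exact_mod_cast hn
    have h2 : (0:ℝ) < (n : ℝ) + 2 * (k : ℝ) := by positivity
    have hd : 0 < 2 * ((k : ℝ) + 1) * ((n : ℝ) + 2 * (k : ℝ)) := by positivity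
    exact mul_pos ih (by positivity)

lemma b_mono {m n : ℕ} (hm : 1 ≤ m) (hmn : m ≤ n) (j : ℕ) : b n j ≤ b m j := by
  induction j with
  | zero => simp [b_zero]
  | succ k ih =>
    rw [b_succ, b_succ]
    have hmr : (1 : ℝ) ≤ (m : ℝ) := by exact_mod_cast hm
    have hmn' : (m : ℝ) ≤ (n : ℝ) := by exact_mod_cast hmn
    have hm0 : (0:ℝ) < (m:ℝ) := by linarith
    have hdm : 0 < 2 * ((k : ℝ) + 1) * ((m : ℝ) + 2 * (k : ℝ)) := by
      apply mul_pos (by positivity)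
      have : (0:ℝ) ≤ 2 * (k:ℝ) := by positivity
      linarith
    have hc : 1 / (2 * ((k : ℝ) + 1) * ((n : ℝ) + 2 * (k : ℝ)))
        ≤ 1 / (2 * ((k : ℝ) + 1) * ((m : ℝ) + 2 * (k : ℝ))) := by
      apply one_div_le_one_div_of_le hdm
      have hk : (0:ℝ) ≤ 2 * ((k : ℝ) + 1) := by positivity
      nlinarith
    have hcnn : 0 ≤ 1 / (2 * ((k : ℝ) + 1) * ((n : ℝ) + 2 * (k : ℝ))) := by
      have hn' : (1:ℝ) ≤ (n : ℝ) := hmr.trans hmn'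
      positivity
    exact mul_le_mul ih hc hcnn (b_pos hm k).le

lemma b_one {n : ℕ} (hn : 1 ≤ n) : b n 1 = 1 / (2 * (n : ℝ)) := by
  have h := b_succ n 0
  rw [b_zero] at h
  norm_num at h
  rw [h]
  ring

lemma b_le {n : ℕ} (hn : 1 ≤ n) (j : ℕ) :
    b n j ≤ 1 / ((2 : ℝ) ^ j * (Nat.factorial j : ℝ)) := by
  induction j with
  | zero => simp [b_zero]
  | succ k ih =>
    have hn' : (1 : ℝ) ≤ (n : ℝ) := by exact_mod_cast hn
    rw [b_succ]
    have hk : (0:ℝ) < 2 * ((k : ℝ) + 1) := by positivity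
    have hc : 1 / (2 * ((k : ℝ) + 1) * ((n : ℝ) + 2 * (k : ℝ)))
        ≤ 1 / (2 * ((k : ℝ) + 1)) := by
      apply one_div_le_one_div_of_le hk
      have hk2 : (0:ℝ) ≤ 2 * (k : ℝ) := by positivity
      have hnk : (1:ℝ) ≤ (n : ℝ) + 2 * (k : ℝ) := by linarith
      nlinarith
    have hf0 : (Nat.factorial k : ℝ) ≠ 0 := by
      exact_mod_cast Nat.factorial_ne_zero k
    have hfk : (0:ℝ) < (Nat.factorial k : ℝ) := by
      exact_mod_cast Nat.factorial_pos k
    have step : b n k * (1 / (2 * ((k : ℝ) + 1) * ((n : ℝ) + 2 * (k : ℝ))))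
        ≤ (1 / ((2 : ℝ) ^ k * (Nat.factorial k : ℝ))) * (1 / (2 * ((k : ℝ) + 1))) := by
      have h2 : (0:ℝ) < (n : ℝ) + 2 * (k : ℝ) := by positivity
      exact mul_le_mul ih hc (by positivity) (by positivity)
    refine step.trans (le_of_eq ?_)
    have hfact : ((Nat.factorial (k+1) : ℕ) : ℝ) = ((k : ℝ) + 1) * (Nat.factorial k : ℝ) := by
      rw [Nat.factorial_succ]; push_cast; ring
    rw [hfact, pow_succ]
    field_simp

lemma master {n : ℕ} (hn : 1 ≤ n) (j : ℕ) {r : ℝ} (hr : 0 ≤ r) :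
    (2 * (j : ℝ) + 2) * b n j * r ^ j ≤ 4 * r ^ j / (Nat.factorial j : ℝ) := by
  have h2j : (j : ℝ) < 2 ^ j := by exact_mod_cast Nat.lt_two_pow_self
  have h1 : (2 * (j : ℝ) + 2) ≤ 4 * 2 ^ j := by
    have h2 : (1:ℝ) ≤ 2 ^ j := one_le_pow₀ (by norm_num : (1:ℝ) ≤ 2)
    nlinarith
  have hfk : (0:ℝ) < (Nat.factorial j : ℝ) := by exact_mod_cast Nat.factorial_pos j
  have hbp := (b_pos hn j).le
  have hjn : (0:ℝ) ≤ (j:ℝ) := Nat.cast_nonneg j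
  calc (2 * (j : ℝ) + 2) * b n j * r ^ j
      ≤ (4 * 2 ^ j) * (1 / ((2 : ℝ) ^ j * (Nat.factorial j : ℝ))) * r ^ j := by
        apply mul_le_mul_of_nonneg_right _ (pow_nonneg hr j)
        exact mul_le_mul h1 (b_le hn j) hbp (by positivity)
    _ = 4 * r ^ j / (Nat.factorial j : ℝ) := by
        field_simp

lemma summable_master (r : ℝ) :
    Summable (fun j : ℕ => 4 * r ^ j / (Nat.factorial j : ℝ)) := by
  simpa [mul_div_assoc] using (Real.summable_pow_div_factorial r).mul_left 4

lemma u_nonneg {n : ℕ} (hn : 1 ≤ n) (j : ℕ) {r : ℝ} (hr : 0 ≤ r) :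
    0 ≤ (2 * (j : ℝ) + 2) * b n j * r ^ j := by
  have hjn : (0:ℝ) ≤ (j:ℝ) := Nat.cast_nonneg j
  have hbp := (b_pos hn j).le
  exact mul_nonneg (mul_nonneg (by linarith) hbp) (pow_nonneg hr j)

lemma mul3_le {a a' c d : ℝ} (h : a ≤ a') (hc : 0 ≤ c) (hd : 0 ≤ d) :
    a * c * d ≤ a' * c * d :=
  mul_le_mul_of_nonneg_right (mul_le_mul_of_nonneg_right h hc) hd

lemma summable_u {n : ℕ} (hn : 1 ≤ n) {r : ℝ} (hr : 0 ≤ r) :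
    Summable (fun j : ℕ => (2 * (j : ℝ) + 2) * b n j * r ^ j) :=
  Summable.of_nonneg_of_le (fun j => u_nonneg hn j hr)
    (fun j => master hn j hr) (summable_master r)

lemma summable_phi_term {n : ℕ} (hn : 1 ≤ n) (x : ℝ) :
    Summable (fun j : ℕ => b n j * x ^ (2 * j)) := by
  apply Summable.of_norm_bounded (summable_u hn (sq_nonneg x))
  intro j
  have hbp := (b_pos hn j).le
  have hx2 : x ^ (2 * j) = (x ^ 2) ^ j := by rw [pow_mul]
  have hnn : (0:ℝ) ≤ b n j * (x ^ 2) ^ j := by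
    exact mul_nonneg hbp (pow_nonneg (sq_nonneg x) j)
  have habs : ‖b n j * x ^ (2 * j)‖ = b n j * (x ^ 2) ^ j := by
    rw [hx2, Real.norm_eq_abs, abs_of_nonneg hnn]
  rw [habs]
  have hjn : (0:ℝ) ≤ (j:ℝ) := Nat.cast_nonneg j
  calc b n j * (x ^ 2) ^ j = 1 * b n j * (x ^ 2) ^ j := by ring
    _ ≤ (2 * (j : ℝ) + 2) * b n j * (x ^ 2) ^ j :=
        mul3_le (by linarith) hbp (pow_nonneg (sq_nonneg x) j)

lemma hasDerivAt_phi0 {n : ℕ} (hn : 1 ≤ n) (x : ℝ) :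
    HasDerivAt (phi0 n)
      (∑' j : ℕ, b n j * (((2 * j : ℕ) : ℝ) * x ^ (2 * j - 1))) x := by
  set R : ℝ := |x| + 1 with hRdef
  have hax : (0:ℝ) ≤ |x| := abs_nonneg x
  have hR1 : 1 ≤ R := by simp only [hRdef]; linarith
  have hR0 : 0 ≤ R := by linarith
  have hxmem : x ∈ Metric.ball (0:ℝ) R := by
    simp only [Metric.mem_ball, Real.dist_eq, sub_zero, hRdef]
    linarith
  have key : HasDerivAt (fun z => ∑' j : ℕ, b n j * z ^ (2 * j))
      (∑' j : ℕ, b n j * (((2 * j : ℕ) : ℝ) * x ^ (2 * j - 1))) x := by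
    apply hasDerivAt_tsum_of_isPreconnected
      (u := fun j : ℕ => (2 * (j : ℝ) + 2) * b n j * (R ^ 2) ^ j)
      (summable_u hn (by positivity)) Metric.isOpen_ball
      ((convex_ball (0:ℝ) R).isPreconnected)
      (fun j y _ => (hasDerivAt_pow (2 * j) y).const_mul (b n j))
      ?_ hxmem (summable_phi_term hn x) hxmem
    intro j y hy
    have hyR : |y| ≤ R := by
      simp only [Metric.mem_ball, Real.dist_eq, sub_zero] at hy
      exact le_of_lt hy
    have hbp := (b_pos hn j).le
    have hnorm : ‖b n j * (((2 * j : ℕ) : ℝ) * y ^ (2 * j - 1))‖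
        = b n j * ((2 * (j : ℝ)) * |y| ^ (2 * j - 1)) := by
      rw [Real.norm_eq_abs, abs_mul, abs_mul, abs_pow, abs_of_nonneg hbp]
      push_cast
      rw [abs_of_nonneg (by positivity : (0:ℝ) ≤ 2 * (j:ℝ))]
    rw [hnorm]
    rcases Nat.eq_zero_or_pos j with hj | hj
    · subst hj
      simp [b_zero]
    · have hyp : |y| ^ (2 * j - 1) ≤ (R ^ 2) ^ j := by
        calc |y| ^ (2 * j - 1) ≤ R ^ (2 * j - 1) :=
              pow_le_pow_left₀ (abs_nonneg y) hyR _
          _ ≤ R ^ (2 * j) := pow_le_pow_right₀ hR1 (by omega)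
          _ = (R ^ 2) ^ j := by rw [← pow_mul]
      have hyp0 : (0:ℝ) ≤ |y| ^ (2 * j - 1) := pow_nonneg (abs_nonneg y) _
      have hjn : (0:ℝ) ≤ (j:ℝ) := Nat.cast_nonneg j
      calc b n j * (2 * (j:ℝ) * |y| ^ (2 * j - 1))
          = 2 * (j:ℝ) * b n j * |y| ^ (2 * j - 1) := by ring
        _ ≤ 2 * (j:ℝ) * b n j * (R ^ 2) ^ j :=
            mul_le_mul_of_nonneg_left hyp (mul_nonneg (by positivity) hbp)
        _ ≤ (2 * (j:ℝ) + 2) * b n j * (R ^ 2) ^ j :=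
            mul3_le (by linarith) hbp (pow_nonneg (by positivity) j)
  exact key

lemma root_eq {n : ℕ} (hn : 1 ≤ n) {x : ℝ} (hx : 0 < x)
    (heq : x * deriv (phi0 n) x = phi0 n x) :
    ∑' j : ℕ, (2 * (j : ℝ) + 1) * b n (j + 1) * x ^ (2 * (j + 1)) = 1 := by
  have hD := (hasDerivAt_phi0 hn x).deriv
  rw [hD] at heq
  rw [← tsum_mul_left] at heq
  have h2 : ∀ j : ℕ, x * (b n j * (((2 * j : ℕ) : ℝ) * x ^ (2 * j - 1)))
      = (2 * (j : ℝ)) * b n j * x ^ (2 * j) := by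
    intro j
    cases j with
    | zero => simp
    | succ k =>
      have he : 2 * (k + 1) - 1 = 2 * k + 1 := by omega
      rw [he]
      push_cast
      ring
  rw [tsum_congr h2] at heq
  have hsumB : Summable (fun j : ℕ => b n j * x ^ (2 * j)) := summable_phi_term hn x
  have hsumA : Summable (fun j : ℕ => (2 * (j : ℝ)) * b n j * x ^ (2 * j)) := by
    apply Summable.of_norm_bounded (summable_u hn (sq_nonneg x))
    intro j
    have hbp := (b_pos hn j).le
    have hjn : (0:ℝ) ≤ (j:ℝ) := Nat.cast_nonneg j
    have hx2 : x ^ (2 * j) = (x ^ 2) ^ j := by rw [pow_mul]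
    have hpj : (0:ℝ) ≤ (x ^ 2) ^ j := pow_nonneg (sq_nonneg x) j
    have hnn : (0:ℝ) ≤ (2 * (j : ℝ)) * b n j * (x ^ 2) ^ j :=
      mul_nonneg (mul_nonneg (by linarith) hbp) hpj
    rw [Real.norm_eq_abs, hx2, abs_of_nonneg hnn]
    exact mul3_le (by linarith) hbp hpj
  set f : ℕ → ℝ := fun j => (2 * (j : ℝ)) * b n j * x ^ (2 * j) - b n j * x ^ (2 * j)
    with hfdef
  have hfs : Summable f := hsumA.sub hsumB
  have hsub : ∑' j, f j = 0 := by
    rw [hfdef]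
    rw [hsumA.tsum_sub hsumB, heq]
    simp [phi0]
  have h0 : f 0 = -1 := by simp [hfdef, b_zero]
  rw [hfs.tsum_eq_zero_add, h0] at hsub
  have hshift : ∑' j : ℕ, f (j + 1) = 1 := by linarith
  calc ∑' j : ℕ, (2 * (j : ℝ) + 1) * b n (j + 1) * x ^ (2 * (j + 1))
      = ∑' j : ℕ, f (j + 1) := by
        apply tsum_congr
        intro j
        simp only [hfdef]
        push_cast
        ring
    _ = 1 := hshift

lemma summable_Sterm {n : ℕ} (hn : 1 ≤ n) (x : ℝ) :
    Summable (fun j : ℕ => (2 * (j : ℝ) + 1) * b n (j + 1) * x ^ (2 * (j + 1))) := by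
  apply Summable.of_norm_bounded
    (g := fun j : ℕ => x ^ 2 * ((2 * (j : ℝ) + 2) * b n j * (x ^ 2) ^ j))
    ((summable_u hn (sq_nonneg x)).mul_left (x ^ 2))
  intro j
  have hbp := (b_pos hn j).le
  have hbp1 := (b_pos hn (j + 1)).le
  have hjn : (0:ℝ) ≤ (j:ℝ) := Nat.cast_nonneg j
  have hx2 : x ^ (2 * (j + 1)) = (x ^ 2) ^ (j + 1) := by rw [pow_mul]
  have hnn : (0:ℝ) ≤ (2 * (j : ℝ) + 1) * b n (j + 1) * (x ^ 2) ^ (j + 1) :=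
    mul_nonneg (mul_nonneg (by linarith) hbp1) (pow_nonneg (sq_nonneg x) (j + 1))
  rw [Real.norm_eq_abs, hx2, abs_of_nonneg hnn]
  have hhalf : b n (j + 1) ≤ b n j / 2 := by
    rw [b_succ]
    have hn' : (1:ℝ) ≤ (n:ℝ) := by exact_mod_cast hn
    have hc : 1 / (2 * ((j : ℝ) + 1) * ((n : ℝ) + 2 * (j : ℝ))) ≤ 1 / 2 := by
      apply one_div_le_one_div_of_le (by norm_num)
      nlinarith
    calc b n j * (1 / (2 * ((j : ℝ) + 1) * ((n : ℝ) + 2 * (j : ℝ))))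
        ≤ b n j * (1 / 2) := mul_le_mul_of_nonneg_left hc hbp
      _ = b n j / 2 := by ring
  have hpj : (0:ℝ) ≤ (x ^ 2) ^ j := pow_nonneg (sq_nonneg x) j
  have hps : (x ^ 2) ^ (j + 1) = x ^ 2 * (x ^ 2) ^ j := by ring
  calc (2 * (j : ℝ) + 1) * b n (j + 1) * (x ^ 2) ^ (j + 1)
      ≤ (2 * (j : ℝ) + 1) * (b n j / 2) * (x ^ 2) ^ (j + 1) :=
        mul_le_mul_of_nonneg_right
          (mul_le_mul_of_nonneg_left hhalf (by linarith))
          (pow_nonneg (sq_nonneg x) (j + 1))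
    _ = x ^ 2 * ((2 * (j : ℝ) + 1) / 2 * b n j * (x ^ 2) ^ j) := by
        rw [hps]; ring
    _ ≤ x ^ 2 * ((2 * (j : ℝ) + 2) * b n j * (x ^ 2) ^ j) :=
        mul_le_mul_of_nonneg_left (mul3_le (by linarith) hbp hpj) (sq_nonneg x)

/-- `λ₀(n)` is strictly increasing in the dimension: if `λ₀(m)` and `λ₀(n)` are the
(unique) positive roots of `λ φ₀'(λ) = φ₀(λ)` in dimensions `m < n`, then `λ₀(m) < λ₀(n)`. -/
theorem stmt4 (m n : ℕ) (hm : 1 ≤ m) (hmn : m < n) (lm ln : ℝ)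
    (hlm : 0 < lm) (hln : 0 < ln)
    (heqm : lm * deriv (phi0 m) lm = phi0 m lm)
    (heqn : ln * deriv (phi0 n) ln = phi0 n ln) :
    lm < ln := by
  have hn : 1 ≤ n := hm.trans hmn.le
  have e1 := root_eq hn hln heqn
  have e2 := root_eq hm hlm heqm
  by_contra hcon
  push_neg at hcon
  -- hcon : ln ≤ lm
  have hle : ∑' j : ℕ, (2 * (j : ℝ) + 1) * b n (j + 1) * ln ^ (2 * (j + 1))
      ≤ ∑' j : ℕ, (2 * (j : ℝ) + 1) * b n (j + 1) * lm ^ (2 * (j + 1)) := by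
    apply Summable.tsum_le_tsum _ (summable_Sterm hn ln) (summable_Sterm hn lm)
    intro j
    have hbp := (b_pos hn (j + 1)).le
    have hjn : (0:ℝ) ≤ (j:ℝ) := Nat.cast_nonneg j
    have hpow : ln ^ (2 * (j + 1)) ≤ lm ^ (2 * (j + 1)) :=
      pow_le_pow_left₀ hln.le hcon _
    exact mul_le_mul_of_nonneg_left hpow (mul_nonneg (by linarith) hbp)
  have hlt : ∑' j : ℕ, (2 * (j : ℝ) + 1) * b n (j + 1) * lm ^ (2 * (j + 1))
      < ∑' j : ℕ, (2 * (j : ℝ) + 1) * b m (j + 1) * lm ^ (2 * (j + 1)) := by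
    apply Summable.tsum_lt_tsum_of_nonneg (i := 0)
    · intro j
      have hbp := (b_pos hn (j + 1)).le
      have hjn : (0:ℝ) ≤ (j:ℝ) := Nat.cast_nonneg j
      exact mul_nonneg (mul_nonneg (by linarith) hbp) (pow_nonneg hlm.le (2 * (j + 1)))
    · intro j
      have hmono := b_mono hm hmn.le (j + 1)
      have hjn : (0:ℝ) ≤ (j:ℝ) := Nat.cast_nonneg j
      exact mul_le_mul_of_nonneg_right
        (mul_le_mul_of_nonneg_left hmono (by linarith))
        (pow_nonneg hlm.le (2 * (j + 1)))
    · have hb1 : b n 1 < b m 1 := by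
        rw [b_one hn, b_one hm]
        apply one_div_lt_one_div_of_lt
        · have : (0:ℝ) < (m:ℝ) := by exact_mod_cast hm
          linarith
        · have : (m:ℝ) < (n:ℝ) := by exact_mod_cast hmn
          linarith
      have hp : (0:ℝ) < lm ^ (2 * (0 + 1)) := pow_pos hlm _
      simp only [Nat.cast_zero]
      have h2 := mul_lt_mul_of_pos_right hb1 hp
      calc (2 * (0:ℝ) + 1) * b n (0 + 1) * lm ^ (2 * (0 + 1))
          = b n 1 * lm ^ (2 * (0 + 1)) := by norm_num
        _ < b m 1 * lm ^ (2 * (0 + 1)) := h2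
        _ = (2 * (0:ℝ) + 1) * b m (0 + 1) * lm ^ (2 * (0 + 1)) := by norm_num
    · exact summable_Sterm hm lm
  linarith
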